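/- Let ℓ ≥ 2 and let {x,y} be a diagonal pair of the grid graph G_ℓ with d(x,y) = 2 (so, writing x = (x1,x2) and y = (y1,y2) with x1 < y1, we have y1 = x1 + 1 and y2 = x2 − 1). Then R(x,y) = Q2(x) ∪ Q4(y). -/

import Mathlib

/-- The `a × b` grid graph on `Fin a × Fin b`: two vertices are adjacent iff they
differ by exactly 1 in one coordinate and agree in the other (i.e. their taxicab
distance is 1). -/
def gridGraph (a b : ℕ) : SimpleGraph (Fin a × Fin b) where
  Adj x y := ((x.1 : ℕ) - y.1) + ((y.1 : ℕ) - x.1) + ((x.2 : ℕ) - y.2) + ((y.2 : ℕ) - x.2) = 1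
  symm := ⟨by intro x y h; omega⟩
  loopless := ⟨by intro x h; omega⟩

def tax {a b : ℕ} (x y : Fin a × Fin b) : ℕ :=
  ((x.1 : ℕ) - y.1) + ((y.1 : ℕ) - x.1) + ((x.2 : ℕ) - y.2) + ((y.2 : ℕ) - x.2)

lemma tax_le_length {a b : ℕ} {x y : Fin a × Fin b} (p : (gridGraph a b).Walk x y) :
    tax x y ≤ p.length := by
  induction p with
  | nil => simp [tax]
  | cons h p ih =>
    have h' : _ = 1 := h
    simp only [SimpleGraph.Walk.length_cons]
    unfold tax at *
    omega

lemma exists_walk_tax {a b : ℕ} (n : ℕ) (x y : Fin a × Fin b) (hn : tax x y = n) :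
    ∃ p : (gridGraph a b).Walk x y, p.length = n := by
  induction n generalizing x with
  | zero =>
    have : x = y := by
      unfold tax at hn
      have h1 : x.1 = y.1 := Fin.ext (by omega)
      have h2 : x.2 = y.2 := Fin.ext (by omega)
      exact Prod.ext h1 h2
    subst this
    exact ⟨SimpleGraph.Walk.nil, rfl⟩
  | succ n ih =>
    unfold tax at hn
    rcases lt_trichotomy (x.1 : ℕ) (y.1 : ℕ) with h1 | h1 | h1
    · have hlt : (x.1 : ℕ) + 1 < a := by omega
      set z : Fin a × Fin b := (⟨x.1 + 1, hlt⟩, x.2) with hz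
      have hadj : (gridGraph a b).Adj x z := by
        show _ = 1; simp only [hz]; omega
      have htz : tax z y = n := by unfold tax; simp only [hz]; omega
      obtain ⟨p, hp⟩ := ih z htz
      exact ⟨SimpleGraph.Walk.cons hadj p, by simp [hp]⟩
    · rcases lt_trichotomy (x.2 : ℕ) (y.2 : ℕ) with h2 | h2 | h2
      · have hlt : (x.2 : ℕ) + 1 < b := by omega
        set z : Fin a × Fin b := (x.1, ⟨x.2 + 1, hlt⟩) with hz
        have hadj : (gridGraph a b).Adj x z := by
          show _ = 1; simp only [hz]; omega
        have htz : tax z y = n := by unfold tax; simp only [hz]; omega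
        obtain ⟨p, hp⟩ := ih z htz
        exact ⟨SimpleGraph.Walk.cons hadj p, by simp [hp]⟩
      · omega
      · have hlt : (x.2 : ℕ) - 1 < b := by omega
        set z : Fin a × Fin b := (x.1, ⟨(x.2 : ℕ) - 1, hlt⟩) with hz
        have hadj : (gridGraph a b).Adj x z := by
          show _ = 1; simp only [hz]; omega
        have htz : tax z y = n := by unfold tax; simp only [hz]; omega
        obtain ⟨p, hp⟩ := ih z htz
        exact ⟨SimpleGraph.Walk.cons hadj p, by simp [hp]⟩
    · have hlt : (x.1 : ℕ) - 1 < a := by omega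
      set z : Fin a × Fin b := (⟨(x.1 : ℕ) - 1, hlt⟩, x.2) with hz
      have hadj : (gridGraph a b).Adj x z := by
        show _ = 1; simp only [hz]; omega
      have htz : tax z y = n := by unfold tax; simp only [hz]; omega
      obtain ⟨p, hp⟩ := ih z htz
      exact ⟨SimpleGraph.Walk.cons hadj p, by simp [hp]⟩

lemma grid_dist {a b : ℕ} (x y : Fin a × Fin b) :
    (gridGraph a b).dist x y = tax x y := by
  obtain ⟨p, hp⟩ := exists_walk_tax (tax x y) x y rfl
  have hle : (gridGraph a b).dist x y ≤ tax x y := hp ▸ SimpleGraph.dist_le p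
  have hreach : (gridGraph a b).Reachable x y := ⟨p⟩
  obtain ⟨q, hq⟩ := hreach.exists_walk_length_eq_dist
  have := tax_le_length q
  omega

theorem stmt9 (ℓ : ℕ) (hℓ : 2 ≤ ℓ) (x y : Fin ℓ × Fin ℓ)
    (hdiag : (x.1 : ℕ) + (x.2 : ℕ) = (y.1 : ℕ) + (y.2 : ℕ)) (hlt : (x.1 : ℕ) < (y.1 : ℕ))
    (hdist : (gridGraph ℓ ℓ).dist x y = 2) :
    {u : Fin ℓ × Fin ℓ | (gridGraph ℓ ℓ).dist u x ≠ (gridGraph ℓ ℓ).dist u y} =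
      {u : Fin ℓ × Fin ℓ | (u.1 : ℕ) ≤ (x.1 : ℕ) ∧ (x.2 : ℕ) ≤ (u.2 : ℕ)} ∪
      {u : Fin ℓ × Fin ℓ | (y.1 : ℕ) ≤ (u.1 : ℕ) ∧ (u.2 : ℕ) ≤ (y.2 : ℕ)} := by
  rw [grid_dist] at hdist
  ext u
  simp only [Set.mem_setOf_eq, Set.mem_union]
  rw [grid_dist, grid_dist]
  unfold tax at *
  omega
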